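/- For any fixed positive constants and exponent p > 1, the supremum Ω(ε̲) of values ω > 0 satisfying m₁ + m₀ > 2(6ω)^{(p−1)/2} + (6ω)^{p−1}/ε̲ and ε̲ − 2(m₁ + m₀) > √(6ω)·δ' + (n/(2ε̲))Σᵢ γᵢ²(6ω)^i, with m₁ = m₀ = ε̲/6, tends to +∞ as ε̲ → +∞. -/

import Mathlib

/-- The supremum `Ω(ε̲)` of admissible values `ω` (with gains `m₁ = m₀ = ε̲/6`)
tends to `+∞` as `ε̲ → +∞`: for every bound `C`, for all sufficiently large `ε̲`
there is an admissible `ω > C`. -/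
theorem stmt_15 (p : ℝ) (hp : 1 < p) (n : ℕ) (γ : ℕ → ℝ) (δ' : ℝ) (hδ' : 0 < δ') :
    ∀ C : ℝ, ∃ E : ℝ, ∀ εlb : ℝ, E ≤ εlb →
      ∃ ω : ℝ, C < ω ∧ 0 < ω ∧
        2 * (6 * ω) ^ ((p - 1) / 2) + (6 * ω) ^ (p - 1) / εlb < εlb / 6 + εlb / 6 ∧
        Real.sqrt (6 * ω) * δ'
            + (n / (2 * εlb)) * ∑ i ∈ Finset.Icc 1 n, (γ i) ^ 2 * (6 * ω) ^ (i : ℕ)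
          < εlb - 2 * (εlb / 6 + εlb / 6) := by
  intro C
  set ω : ℝ := max C 0 + 1 with hωdef
  have hωC : C < ω := lt_of_le_of_lt (le_max_left C 0) (lt_add_one _)
  have hω0 : 0 < ω := by
    have := le_max_right C 0
    simp only [hωdef]; linarith
  set A : ℝ := 2 * (6 * ω) ^ ((p - 1) / 2) with hAdef
  set B : ℝ := (6 * ω) ^ (p - 1) with hBdef
  set S : ℝ := ∑ i ∈ Finset.Icc 1 n, (γ i) ^ 2 * (6 * ω) ^ (i : ℕ) with hSdef
  set D : ℝ := Real.sqrt (6 * ω) * δ' with hDdef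
  have hA : 0 ≤ A := by positivity
  have hB : 0 ≤ B := by positivity
  have hS : 0 ≤ S := Finset.sum_nonneg fun i _ => by positivity
  have hD : 0 ≤ D := by positivity
  refine ⟨max 1 (max (3 * (A + B) + 1) (3 * (D + (n : ℝ) / 2 * S) + 1)), ?_⟩
  intro εlb hE
  have hε1 : (1 : ℝ) ≤ εlb := le_trans (le_max_left _ _) hE
  have hε2 : 3 * (A + B) + 1 ≤ εlb :=
    le_trans (le_trans (le_max_left _ _) (le_max_right _ _)) hE
  have hε3 : 3 * (D + (n : ℝ) / 2 * S) + 1 ≤ εlb :=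
    le_trans (le_trans (le_max_right _ _) (le_max_right _ _)) hE
  refine ⟨ω, hωC, hω0, ?_, ?_⟩
  · have h1 : B / εlb ≤ B := div_le_self hB hε1
    linarith
  · have hnn : (0 : ℝ) ≤ (n : ℝ) := Nat.cast_nonneg n
    have h2 : (n : ℝ) / (2 * εlb) ≤ (n : ℝ) / 2 :=
      div_le_div_of_nonneg_left hnn two_pos (by linarith)
    have h3 : (n : ℝ) / (2 * εlb) * S ≤ (n : ℝ) / 2 * S :=
      mul_le_mul_of_nonneg_right h2 hS
    linarith
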